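/- Chen's identity: for X a bounded variation path on [0,t] and Y a bounded variation path on [t,T], the signature of the concatenation X*Y over [0,T] equals the tensor product of the signatures: S_{[0,T]}(X*Y) = S_{[0,t]}(X) ⊗ S_{[t,T]}(Y). -/

import Mathlib

noncomputable section

/-- The signature coefficient of a path with derivative `X'` over `[a,b]`,
indexed by a word `I` of coordinates: `S_∅ = 1` and
`S_{(i::I)}[a,b] = ∫_a^b X'_i(t) · S_I[t,b] dt`, i.e. the iterated
Riemann–Stieltjes integral `∫_{a<u₁<⋯<uₙ<b} dX_{i₁}(u₁)⋯dX_{iₙ}(uₙ)`. -/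
def sigCoeff (d : ℕ) (X' : ℝ → Fin d → ℝ) : List (Fin d) → ℝ → ℝ → ℝ
  | [], _, _ => 1
  | i :: I, a, b => ∫ t in a..b, X' t i * sigCoeff d X' I t b

open MeasureTheory Set intervalIntegral

/-- Continuity of the signature coefficient in the left endpoint. -/
lemma sig_cont (d : ℕ) (a b : ℝ) (hab : a ≤ b) (W' : ℝ → Fin d → ℝ)
    (hW : ∀ i, ContinuousOn (fun s => W' s i) (Set.Icc a b)) :
    ∀ I : List (Fin d), ContinuousOn (fun u => sigCoeff d W' I u b) (Set.Icc a b) := by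
  intro I
  induction I with
  | nil => exact continuousOn_const
  | cons i I ih =>
    have hg : ContinuousOn (fun s => W' s i * sigCoeff d W' I s b) (Set.Icc a b) :=
      (hW i).mul ih
    have hint : IntegrableOn (fun s => W' s i * sigCoeff d W' I s b) (Set.uIcc a b) := by
      rw [Set.uIcc_of_le hab]
      exact hg.integrableOn_Icc
    have h := intervalIntegral.continuousOn_primitive_interval_left hint
    rw [Set.uIcc_of_le hab] at h
    exact h

lemma sig_congr_right (d : ℕ) (t T : ℝ) (htT : t ≤ T) (Y' Z' : ℝ → Fin d → ℝ)
    (hZY : ∀ s, t < s → Z' s = Y' s) :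
    ∀ I : List (Fin d), ∀ u ∈ Set.Icc t T, sigCoeff d Z' I u T = sigCoeff d Y' I u T := by
  intro I
  induction I with
  | nil => intro u _; rfl
  | cons i I ih =>
    intro u hu
    show (∫ s in u..T, Z' s i * sigCoeff d Z' I s T)
        = ∫ s in u..T, Y' s i * sigCoeff d Y' I s T
    apply intervalIntegral.integral_congr_ae
    apply Filter.Eventually.of_forall
    intro s hs
    rw [Set.uIoc_of_le hu.2] at hs
    have hts : t < s := lt_of_le_of_lt hu.1 hs.1
    rw [hZY s hts, ih s ⟨le_of_lt hts, hs.2⟩]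

lemma chen_aux
    (d : ℕ) (t T : ℝ) (h0t : 0 ≤ t) (htT : t ≤ T)
    (X' Y' Z' : ℝ → Fin d → ℝ)
    (hXc : ∀ i : Fin d, ContinuousOn (fun s => X' s i) (Set.Icc (0:ℝ) t))
    (hYc : ∀ i : Fin d, ContinuousOn (fun s => Y' s i) (Set.Icc t T))
    (hZ' : ∀ s : ℝ, Z' s = if s ≤ t then X' s else Y' s)
    (I : List (Fin d)) :
    ∀ a ∈ Set.Icc (0:ℝ) t,
      sigCoeff d Z' I a T
        = ∑ k ∈ Finset.range (I.length + 1),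
            sigCoeff d X' (I.take k) a t * sigCoeff d Y' (I.drop k) t T := by
  have hZY : ∀ s, t < s → Z' s = Y' s := by
    intro s hs; rw [hZ' s, if_neg (not_le.mpr hs)]
  have hZX : ∀ s, s ≤ t → Z' s = X' s := by
    intro s hs; rw [hZ' s, if_pos hs]
  induction I with
  | nil => intro a _; simp [sigCoeff]
  | cons i I ih =>
    intro a ha
    have hat : a ≤ t := ha.2
    set n := I.length with hn
    set c : ℕ → ℝ := fun k => sigCoeff d Y' (I.drop k) t T with hc
    -- the function appearing inside the integral
    set f : ℝ → ℝ := fun s => Z' s i * sigCoeff d Z' I s T with hf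
    -- its value on [a,t]
    set g1 : ℝ → ℝ := fun s =>
      ∑ k ∈ Finset.range (n + 1), (X' s i * sigCoeff d X' (I.take k) s t) * c k with hg1
    -- its value on (t,T]
    set g2 : ℝ → ℝ := fun s => Y' s i * sigCoeff d Y' I s T with hg2
    have hg1c : ∀ k, ContinuousOn
        (fun s => (X' s i * sigCoeff d X' (I.take k) s t) * c k) (Set.Icc (0:ℝ) t) :=
      fun k => ((hXc i).mul (sig_cont d 0 t h0t X' hXc (I.take k))).mul continuousOn_const
    have hg1int : ∀ k, IntervalIntegrable
        (fun s => (X' s i * sigCoeff d X' (I.take k) s t) * c k) volume a t := by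
      intro k
      apply ContinuousOn.intervalIntegrable
      rw [Set.uIcc_of_le hat]
      exact (hg1c k).mono (Set.Icc_subset_Icc ha.1 le_rfl)
    have hg1i : IntervalIntegrable g1 volume a t := by
      apply ContinuousOn.intervalIntegrable
      rw [Set.uIcc_of_le hat]
      apply continuousOn_finset_sum
      intro k _
      exact (hg1c k).mono (Set.Icc_subset_Icc ha.1 le_rfl)
    have hg2i : IntervalIntegrable g2 volume t T := by
      apply ContinuousOn.intervalIntegrable
      rw [Set.uIcc_of_le htT]
      exact (hYc i).mul (sig_cont d t T htT Y' hYc I)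
    have hfg1 : Set.EqOn f g1 (Set.uIcc a t) := by
      intro s hs
      rw [Set.uIcc_of_le hat] at hs
      have hs0 : s ∈ Set.Icc (0:ℝ) t := ⟨le_trans ha.1 hs.1, hs.2⟩
      have := ih s hs0
      simp only [hf, hg1, hZX s hs.2, this, Finset.mul_sum]
      exact Finset.sum_congr rfl fun k _ => by ring
    have hfg2 : ∀ s ∈ Set.uIoc t T, f s = g2 s := by
      intro s hs
      rw [Set.uIoc_of_le htT] at hs
      simp only [hf, hg2, hZY s hs.1,
        sig_congr_right d t T htT Y' Z' hZY I s ⟨le_of_lt hs.1, hs.2⟩]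
    have hf1 : IntervalIntegrable f volume a t := by
      apply hg1i.congr
      intro s hs
      exact (hfg1 (Set.uIoc_subset_uIcc hs)).symm
    have hf2 : IntervalIntegrable f volume t T := by
      apply hg2i.congr
      intro s hs
      exact (hfg2 s hs).symm
    have hsplit : (∫ s in a..T, f s) = (∫ s in a..t, f s) + ∫ s in t..T, f s :=
      (intervalIntegral.integral_add_adjacent_intervals hf1 hf2).symm
    have e1 : (∫ s in a..t, f s) = ∫ s in a..t, g1 s := intervalIntegral.integral_congr hfg1
    have e2 : (∫ s in t..T, f s) = ∫ s in t..T, g2 s :=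
      intervalIntegral.integral_congr_ae (Filter.Eventually.of_forall hfg2)
    have e3 : (∫ s in a..t, g1 s)
        = ∑ k ∈ Finset.range (n + 1), sigCoeff d X' (i :: I.take k) a t * c k := by
      rw [hg1]
      rw [intervalIntegral.integral_finset_sum (fun k _ => hg1int k)]
      refine Finset.sum_congr rfl fun k _ => ?_
      rw [intervalIntegral.integral_mul_const]
      rfl
    have e4 : (∫ s in t..T, g2 s) = sigCoeff d Y' (i :: I) t T := rfl
    show (∫ s in a..T, f s) = _
    rw [hsplit, e1, e2, e3, e4]
    conv_rhs => rw [Finset.sum_range_succ']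
    simp only [List.take_succ_cons, List.drop_succ_cons, List.take_zero, List.drop_zero]
    show _ = _ + sigCoeff d X' [] a t * sigCoeff d Y' (i :: I) t T
    rw [show sigCoeff d X' [] a t = 1 from rfl, one_mul]
    rfl

/-- Chen's identity: for `X` of bounded variation (here `C¹`) on
`[0,t]` and `Y` on `[t,T]`, the signature of the concatenation `Z = X * Y` over
`[0,T]` equals the tensor product of the signatures, i.e. in coordinates, for
every word `I`:
`S_{[0,T]}(X*Y)_I = ∑_k S_{[0,t]}(X)_{I₁…I_k} · S_{[t,T]}(Y)_{I_{k+1}…}`. -/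
theorem chen_identity
    (d : ℕ) (t T : ℝ) (h0t : 0 ≤ t) (htT : t ≤ T)
    (X Y Z : ℝ → Fin d → ℝ) (X' Y' Z' : ℝ → Fin d → ℝ)
    (hX : ∀ i : Fin d, ∀ s ∈ Set.Icc (0:ℝ) t, HasDerivAt (fun u => X u i) (X' s i) s)
    (hY : ∀ i : Fin d, ∀ s ∈ Set.Icc t T, HasDerivAt (fun u => Y u i) (Y' s i) s)
    (hXc : ∀ i : Fin d, ContinuousOn (fun s => X' s i) (Set.Icc (0:ℝ) t))
    (hYc : ∀ i : Fin d, ContinuousOn (fun s => Y' s i) (Set.Icc t T))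
    (hZ : ∀ s : ℝ, Z s = if s ≤ t then X s else fun i => X t i + Y s i - Y t i)
    (hZ' : ∀ s : ℝ, Z' s = if s ≤ t then X' s else Y' s)
    (I : List (Fin d)) :
    sigCoeff d Z' I 0 T
      = ∑ k ∈ Finset.range (I.length + 1),
          sigCoeff d X' (I.take k) 0 t * sigCoeff d Y' (I.drop k) t T := by
  exact chen_aux d t T h0t htT X' Y' Z' hXc hYc hZ' I 0 ⟨le_rfl, h0t⟩
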